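/- For real numbers x, y with 0 < y < 1 and x = y, the integral I(y,y) := ∫₀^{arcosh(1/y)} dt/√(1 − y² cosh² t) equals the complete elliptic integral of the first kind K(√(1 − y²)) = ∫₀^{π/2} dθ/√(1 − (1−y²) sin² θ). -/

import Mathlib

open MeasureTheory Set
open scoped Interval

noncomputable def arcosh (x : ℝ) : ℝ := Real.log (x + Real.sqrt (x ^ 2 - 1))

lemma cosh_sinh_arcosh (y : ℝ) (hy0 : 0 < y) (hy1 : y < 1) :
    Real.cosh (arcosh (1/y)) = 1/y ∧
    Real.sinh (arcosh (1/y)) = Real.sqrt (1 - y^2) / y := by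
  set c := Real.sqrt (1 - y^2) with hc
  have hc2 : c^2 = 1 - y^2 := Real.sq_sqrt (by nlinarith)
  have hc0 : 0 ≤ c := Real.sqrt_nonneg _
  have hsq : Real.sqrt ((1/y)^2 - 1) = c / y := by
    rw [show (1/y)^2 - 1 = (c/y)^2 by field_simp [hc2]; linarith [hc2] ]
    exact Real.sqrt_sq (by positivity)
  have hu : (0:ℝ) < 1/y + Real.sqrt ((1/y)^2 - 1) := by
    rw [hsq]; positivity
  have hinv : (1/y + Real.sqrt ((1/y)^2 - 1))⁻¹ = y / (1 + c) := by
    rw [hsq, ← add_div, inv_div]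
  constructor
  · rw [arcosh, Real.cosh_log hu, hinv, hsq]
    field_simp
    nlinarith [hc2]
  · rw [arcosh, Real.sinh_log hu, hinv, hsq]
    field_simp
    nlinarith [hc2]

lemma hD_pos (y c : ℝ) (hy0 : 0 < y) (hc2 : c^2 = 1 - y^2) (x : ℝ) :
    0 < 1 - c^2 * Real.sin x ^ 2 := by
  nlinarith [Real.sin_sq_le_one x, Real.neg_one_le_sin x, Real.sin_le_one x, sq_nonneg (Real.sin x)]

lemma hasDerivAt_subst (y c : ℝ) (hy0 : 0 < y) (hc2 : c^2 = 1 - y^2) (θ : ℝ) :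
    HasDerivAt (fun x => Real.arsinh (c * Real.sin x / Real.sqrt (1 - c^2 * Real.sin x ^ 2)))
      (c * Real.cos θ / (1 - c^2 * Real.sin θ ^ 2)) θ := by
  have hD := hD_pos y c hy0 hc2
  have hsD : 0 < Real.sqrt (1 - c^2 * Real.sin θ ^ 2) := Real.sqrt_pos.2 (hD θ)
  have hsq : Real.sqrt (1 - c^2 * Real.sin θ ^ 2) ^ 2 = 1 - c^2 * Real.sin θ ^ 2 :=
    Real.sq_sqrt (hD θ).le
  have hDder : HasDerivAt (fun x => 1 - c^2 * Real.sin x ^ 2)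
      (-(c^2 * (2 * Real.sin θ ^ 1 * Real.cos θ))) θ := by
    simpa using (((Real.hasDerivAt_sin θ).pow 2).const_mul (c^2)).const_sub 1
  have hsqrtder : HasDerivAt (fun x => Real.sqrt (1 - c^2 * Real.sin x ^ 2))
      (1 / (2 * Real.sqrt (1 - c^2 * Real.sin θ ^ 2)) * -(c^2 * (2 * Real.sin θ ^ 1 * Real.cos θ))) θ :=
    (Real.hasDerivAt_sqrt (hD θ).ne').comp θ hDder
  have hnum : HasDerivAt (fun x => c * Real.sin x) (c * Real.cos θ) θ :=
    (Real.hasDerivAt_sin θ).const_mul c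
  have hw : HasDerivAt (fun x => c * Real.sin x / Real.sqrt (1 - c^2 * Real.sin x ^ 2))
      ((c * Real.cos θ * Real.sqrt (1 - c^2 * Real.sin θ ^ 2) -
        c * Real.sin θ * (1 / (2 * Real.sqrt (1 - c^2 * Real.sin θ ^ 2)) *
          -(c^2 * (2 * Real.sin θ ^ 1 * Real.cos θ)))) /
        Real.sqrt (1 - c^2 * Real.sin θ ^ 2) ^ 2) θ :=
    hnum.div hsqrtder hsD.ne'
  have harsinh := (Real.hasDerivAt_arsinh
    (c * Real.sin θ / Real.sqrt (1 - c^2 * Real.sin θ ^ 2))).comp θ hw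
  refine harsinh.congr_deriv ?_
  symm
  have h1w : 1 + (c * Real.sin θ / Real.sqrt (1 - c^2 * Real.sin θ ^ 2)) ^ 2
      = (1 - c^2 * Real.sin θ ^ 2)⁻¹ := by
    rw [div_pow, hsq]
    field_simp [(hD θ).ne']
    ring
  rw [h1w, Real.sqrt_inv, inv_inv]
  rw [hsq]
  field_simp [hsD.ne', (hD θ).ne']
  linear_combination (-(c * Real.cos θ)) * hsq


lemma sinh_sub_ge {a b : ℝ} (h : a ≤ b) : b - a ≤ Real.sinh b - Real.sinh a := by
  have hmono : Monotone (fun x => Real.sinh x - x) := by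
    apply monotone_of_deriv_nonneg
    · exact Real.differentiable_sinh.sub differentiable_id
    · intro x
      have hd : deriv (fun x => Real.sinh x - x) x = Real.cosh x - 1 :=
        ((Real.hasDerivAt_sinh x).sub (hasDerivAt_id x)).deriv
      rw [hd]
      linarith [Real.one_le_cosh x]
  have := hmono h
  simp only at this
  linarith

lemma key_lower (y T : ℝ) (hy0 : 0 < y) (hcoshT : Real.cosh T = 1/y)
    {t : ℝ} (ht0 : 0 ≤ t) (htT : t ≤ T) :
    y^2 * Real.sinh T * (T - t) ≤ 1 - y^2 * Real.cosh t ^ 2 := by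
  have h1 : 1 - y^2 * Real.cosh t ^ 2
      = y^2 * ((Real.sinh T - Real.sinh t) * (Real.sinh T + Real.sinh t)) := by
    have : y^2 * Real.cosh T ^ 2 = 1 := by rw [hcoshT]; field_simp
    rw [Real.cosh_sq T] at this
    rw [Real.cosh_sq t]
    linear_combination -this
  rw [h1]
  have h2 : T - t ≤ Real.sinh T - Real.sinh t := sinh_sub_ge htT
  have h3 : 0 ≤ Real.sinh t := Real.sinh_nonneg_iff.2 ht0
  have h4 : 0 < Real.sinh T ∨ Real.sinh T = 0 := by
    rcases lt_or_eq_of_le (h3.trans (by linarith [sinh_sub_ge htT] : Real.sinh t ≤ Real.sinh T)) with h|h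
    · exact Or.inl h
    · exact Or.inr h.symm
  have h5 : 0 ≤ T - t := by linarith
  have hsT : 0 ≤ Real.sinh T := by linarith
  have h6 : Real.sinh T ≤ Real.sinh T + Real.sinh t := by linarith
  have h7 : (T - t) * Real.sinh T ≤ (Real.sinh T - Real.sinh t) * (Real.sinh T + Real.sinh t) :=
    mul_le_mul h2 h6 hsT (by linarith)
  nlinarith [h7, sq_nonneg y]

lemma g_integrable (y T : ℝ) (hy0 : 0 < y) (hy1 : y < 1) (hT0 : 0 < T)
    (hcoshT : Real.cosh T = 1/y) :
    IntegrableOn (fun t => 1 / Real.sqrt (1 - y^2 * Real.cosh t ^ 2)) (Icc 0 T) := by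
  have hsinhT : 0 < Real.sinh T := Real.sinh_pos_iff.2 hT0
  set C : ℝ := (Real.sqrt (y^2 * Real.sinh T))⁻¹ with hC
  rw [integrableOn_Icc_iff_integrableOn_Ioc]
  -- majorant
  have h1 : IntervalIntegrable (fun x : ℝ => x ^ (-(1/2) : ℝ)) volume 0 T :=
    intervalIntegral.intervalIntegrable_rpow' (by norm_num)
  have h2 : IntervalIntegrable (fun x : ℝ => (T - x) ^ (-(1/2) : ℝ)) volume 0 T := by
    simpa using (h1.comp_sub_left T).symm
  have h3 : IntervalIntegrable (fun x : ℝ => C * (T - x) ^ (-(1/2) : ℝ)) volume 0 T :=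
    h2.const_mul C
  have hmaj : IntegrableOn (fun x : ℝ => C * (T - x) ^ (-(1/2) : ℝ)) (Ioc 0 T) :=
    (intervalIntegrable_iff_integrableOn_Ioc_of_le hT0.le).1 h3
  apply MeasureTheory.Integrable.mono hmaj
  · -- ae strongly measurable
    have hcont : Continuous fun t => Real.sqrt (1 - y^2 * Real.cosh t ^ 2) := by
      fun_prop
    exact (measurable_const.div hcont.measurable).aestronglyMeasurable
  · rw [ae_restrict_iff' measurableSet_Ioc]
    filter_upwards with t ht
    have ht0 : 0 ≤ t := ht.1.le
    have htT : t ≤ T := ht.2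
    have hkey := key_lower y T hy0 hcoshT ht0 htT
    have hTt : 0 ≤ T - t := by linarith
    have hrw : (T - t) ^ (-(1/2) : ℝ) = (Real.sqrt (T - t))⁻¹ := by
      rw [show (-(1/2) : ℝ) = -(1/2) from rfl, Real.rpow_neg hTt, ← Real.sqrt_eq_rpow]
    have hgle : 1 / Real.sqrt (1 - y^2 * Real.cosh t ^ 2) ≤ C * (T - t) ^ (-(1/2) : ℝ) := by
      rw [hrw, hC, ← mul_inv, ← Real.sqrt_mul (by positivity) (T - t)]
      rcases eq_or_lt_of_le htT with h | h
      · subst h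
        have : 1 - y^2 * Real.cosh t ^ 2 = 0 := by
          rw [hcoshT]; field_simp; norm_num
        simp [this]
      · have hpos : 0 < y^2 * Real.sinh T * (T - t) := mul_pos (mul_pos (by positivity) hsinhT) (by linarith)
        rw [one_div]
        apply inv_anti₀ (Real.sqrt_pos.2 hpos)
        exact Real.sqrt_le_sqrt hkey
    have hg_nonneg : 0 ≤ 1 / Real.sqrt (1 - y^2 * Real.cosh t ^ 2) := by positivity
    calc ‖1 / Real.sqrt (1 - y^2 * Real.cosh t ^ 2)‖
        = 1 / Real.sqrt (1 - y^2 * Real.cosh t ^ 2) := Real.norm_of_nonneg hg_nonneg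
      _ ≤ C * (T - t) ^ (-(1/2) : ℝ) := hgle
      _ ≤ ‖C * (T - t) ^ (-(1/2) : ℝ)‖ := le_abs_self _
lemma pointwise_id (y c : ℝ) (hy0 : 0 < y) (hc2 : c^2 = 1 - y^2) (hc0 : 0 < c)
    {θ : ℝ} (hθ : θ ∈ Ico (0:ℝ) (Real.pi/2)) :
    (1 / Real.sqrt (1 - y^2 * Real.cosh (Real.arsinh
        (c * Real.sin θ / Real.sqrt (1 - c^2 * Real.sin θ ^ 2))) ^ 2)) *
      (c * Real.cos θ / (1 - c^2 * Real.sin θ ^ 2)) =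
    1 / Real.sqrt (1 - c^2 * Real.sin θ ^ 2) := by
  have hD := hD_pos y c hy0 hc2 θ
  have hsD : 0 < Real.sqrt (1 - c^2 * Real.sin θ ^ 2) := Real.sqrt_pos.2 hD
  have hsq : Real.sqrt (1 - c^2 * Real.sin θ ^ 2) ^ 2 = 1 - c^2 * Real.sin θ ^ 2 :=
    Real.sq_sqrt hD.le
  have hcos : 0 < Real.cos θ :=
    Real.cos_pos_of_mem_Ioo ⟨by linarith [hθ.1, Real.pi_pos], hθ.2⟩
  have h1w : 1 + (c * Real.sin θ / Real.sqrt (1 - c^2 * Real.sin θ ^ 2)) ^ 2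
      = (1 - c^2 * Real.sin θ ^ 2)⁻¹ := by
    rw [div_pow, hsq]
    field_simp
    ring
  have hcosh2 : Real.cosh (Real.arsinh
      (c * Real.sin θ / Real.sqrt (1 - c^2 * Real.sin θ ^ 2))) ^ 2
      = (1 - c^2 * Real.sin θ ^ 2)⁻¹ := by
    rw [Real.cosh_arsinh, Real.sq_sqrt (by positivity), h1w]
  have hexpr : 1 - y^2 * Real.cosh (Real.arsinh
      (c * Real.sin θ / Real.sqrt (1 - c^2 * Real.sin θ ^ 2))) ^ 2
      = (c * Real.cos θ)^2 / (1 - c^2 * Real.sin θ ^ 2) := by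
    rw [hcosh2]
    field_simp
    nlinarith [Real.sin_sq_add_cos_sq θ, hc2]
  rw [hexpr, Real.sqrt_div (sq_nonneg _), Real.sqrt_sq (by positivity : (0:ℝ) ≤ c * Real.cos θ)]
  rw [one_div_div]
  rw [div_mul_div_comm]
  rw [div_eq_div_iff (by positivity) hsD.ne']
  linear_combination (c * Real.cos θ) * hsq

theorem integral_eq_completeEllipticK_of_eq (y : ℝ) (hy0 : 0 < y) (hy1 : y < 1) :
    (∫ t in (0:ℝ)..arcosh (1 / y), 1 / Real.sqrt (1 - y ^ 2 * Real.cosh t ^ 2)) =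
      ∫ θ in (0:ℝ)..(Real.pi / 2), 1 / Real.sqrt (1 - (1 - y ^ 2) * Real.sin θ ^ 2) := by
  obtain ⟨hcoshT, hsinhT⟩ := cosh_sinh_arcosh y hy0 hy1
  rw [show (1:ℝ) - y ^ 2 = Real.sqrt (1 - y ^ 2) ^ 2 from
    (Real.sq_sqrt (by nlinarith)).symm]
  set c := Real.sqrt (1 - y ^ 2) with hc
  have hc2 : c ^ 2 = 1 - y ^ 2 := Real.sq_sqrt (by nlinarith)
  have hc0 : 0 < c := Real.sqrt_pos.2 (by nlinarith)
  set T := arcosh (1 / y) with hTdef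
  have hsinhT' : 0 < Real.sinh T := by rw [hsinhT]; positivity
  have hT0 : 0 < T := Real.sinh_pos_iff.1 hsinhT'
  have hD := hD_pos y c hy0 hc2
  set f : ℝ → ℝ := fun θ =>
    Real.arsinh (c * Real.sin θ / Real.sqrt (1 - c ^ 2 * Real.sin θ ^ 2)) with hfdef
  set f' : ℝ → ℝ := fun θ => c * Real.cos θ / (1 - c ^ 2 * Real.sin θ ^ 2) with hf'def
  set g : ℝ → ℝ := fun t => 1 / Real.sqrt (1 - y ^ 2 * Real.cosh t ^ 2) with hgdef
  have hpi2 : (0:ℝ) ≤ Real.pi / 2 := by positivity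
  have huIcc : [[(0:ℝ), Real.pi / 2]] = Icc 0 (Real.pi / 2) := uIcc_of_le hpi2
  have hmin : min (0:ℝ) (Real.pi / 2) = 0 := min_eq_left hpi2
  have hmax : max (0:ℝ) (Real.pi / 2) = Real.pi / 2 := max_eq_right hpi2
  -- endpoint values
  have hf0 : f 0 = 0 := by simp [hfdef]
  have hs1 : Real.sqrt (1 - c ^ 2 * (1:ℝ) ^ 2) = y := by
    rw [show 1 - c ^ 2 * (1:ℝ) ^ 2 = y ^ 2 by nlinarith]
    exact Real.sqrt_sq hy0.le
  have hfpi : f (Real.pi / 2) = T := by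
    simp only [hfdef, Real.sin_pi_div_two, mul_one]
    rw [hs1, show c / y = Real.sinh T from hsinhT.symm, Real.arsinh_sinh]
  -- sqrt D lower bound
  have hsD_ge : ∀ x : ℝ, y ≤ Real.sqrt (1 - c ^ 2 * Real.sin x ^ 2) := by
    intro x
    rw [show y = Real.sqrt (y ^ 2) from (Real.sqrt_sq hy0.le).symm]
    apply Real.sqrt_le_sqrt
    nlinarith [Real.sin_sq_le_one x]
  -- image bounds
  have hmemIcc : ∀ θ ∈ Icc (0:ℝ) (Real.pi / 2), f θ ∈ Icc 0 T := by
    intro θ hθ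
    have hsin0 : 0 ≤ Real.sin θ :=
      Real.sin_nonneg_of_nonneg_of_le_pi hθ.1 (by linarith [Real.pi_pos, hθ.2])
    constructor
    · exact Real.arsinh_nonneg_iff.2 (by positivity)
    · rw [← hfpi]
      apply Real.arsinh_le_arsinh.2
      simp only [Real.sin_pi_div_two, mul_one]
      have h1 := hsD_ge θ
      rw [hs1]
      rw [div_le_div_iff₀ (lt_of_lt_of_le hy0 h1) hy0]
      calc c * Real.sin θ * y ≤ c * 1 * y := by
            gcongr
            exact Real.sin_le_one θ
        _ = c * y := by ring
        _ ≤ c * Real.sqrt (1 - c ^ 2 * Real.sin θ ^ 2) := by gcongr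
  have hmemIco : ∀ θ ∈ Ioo (0:ℝ) (Real.pi / 2), f θ ∈ Ico 0 T := by
    intro θ hθ
    have hθIcc : θ ∈ Icc (0:ℝ) (Real.pi / 2) := ⟨hθ.1.le, hθ.2.le⟩
    refine ⟨(hmemIcc θ hθIcc).1, ?_⟩
    have hsin0 : 0 ≤ Real.sin θ :=
      Real.sin_nonneg_of_nonneg_of_le_pi hθ.1.le (by linarith [Real.pi_pos, hθ.2])
    have hcos : 0 < Real.cos θ :=
      Real.cos_pos_of_mem_Ioo ⟨by linarith [Real.pi_pos, hθ.1], hθ.2⟩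
    have hsin1 : Real.sin θ < 1 := by
      nlinarith [Real.sin_sq_add_cos_sq θ]
    rw [← hfpi]
    apply Real.arsinh_lt_arsinh.2
    simp only [Real.sin_pi_div_two, mul_one]
    have h1 := hsD_ge θ
    rw [hs1]
    rw [div_lt_div_iff₀ (lt_of_lt_of_le hy0 h1) hy0]
    calc c * Real.sin θ * y < c * 1 * y := by gcongr
      _ = c * y := by ring
      _ ≤ c * Real.sqrt (1 - c ^ 2 * Real.sin θ ^ 2) := by gcongr
  -- continuity of g on Ico 0 T
  have hgpos : ∀ t ∈ Ico (0:ℝ) T, 0 < 1 - y ^ 2 * Real.cosh t ^ 2 := by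
    intro t ht
    have hcosh_lt : Real.cosh t < Real.cosh T := by
      apply Real.cosh_lt_cosh.2
      rw [abs_of_nonneg ht.1, abs_of_nonneg hT0.le]
      exact ht.2
    rw [hcoshT] at hcosh_lt
    have h1 : y * Real.cosh t < 1 := by
      rw [lt_div_iff₀ hy0] at hcosh_lt
      linarith [hcosh_lt]
    have ha : 0 < 1 - y * Real.cosh t := by linarith
    have hb : 0 < 1 + y * Real.cosh t := by positivity
    nlinarith [mul_pos ha hb]
  have hg_contIco : ContinuousOn g (Ico 0 T) := by
    apply ContinuousOn.div continuousOn_const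
    · exact (Real.continuous_sqrt.comp (by fun_prop)).continuousOn
    · intro t ht
      exact (Real.sqrt_pos.2 (hgpos t ht)).ne'
  -- hypotheses of the substitution theorem
  have hf_cont : ContinuousOn f [[(0:ℝ), Real.pi / 2]] := fun θ _ =>
    (hasDerivAt_subst y c hy0 hc2 θ).continuousAt.continuousWithinAt
  have hff' : ∀ x ∈ Ioo (min (0:ℝ) (Real.pi / 2)) (max (0:ℝ) (Real.pi / 2)),
      HasDerivWithinAt f (f' x) (Ioi x) x := fun x _ =>
    (hasDerivAt_subst y c hy0 hc2 x).hasDerivWithinAt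
  have hg_cont : ContinuousOn g (f '' Ioo (min (0:ℝ) (Real.pi / 2)) (max (0:ℝ) (Real.pi / 2))) := by
    rw [hmin, hmax]
    apply hg_contIco.mono
    rintro _ ⟨θ, hθ, rfl⟩
    exact hmemIco θ hθ
  have hg1 : IntegrableOn g (f '' [[(0:ℝ), Real.pi / 2]]) := by
    apply (g_integrable y T hy0 hy1 hT0 hcoshT).mono_set
    rintro _ ⟨θ, hθ, rfl⟩
    rw [huIcc] at hθ
    exact hmemIcc θ hθ
  -- the continuous RHS integrand
  have hRcont : Continuous (fun θ : ℝ => 1 / Real.sqrt (1 - c ^ 2 * Real.sin θ ^ 2)) := by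
    apply Continuous.div continuous_const
    · exact Real.continuous_sqrt.comp (by fun_prop)
    · intro θ
      exact (Real.sqrt_pos.2 (hD θ)).ne'
  have hne : ∀ᵐ θ : ℝ ∂volume, θ ≠ Real.pi / 2 := by
    refine (MeasureTheory.ae_iff).2 ?_
    simp only [ne_eq, not_not, setOf_eq_eq_singleton]
    exact measure_singleton _
  have hpt : ∀ θ ∈ Ico (0:ℝ) (Real.pi / 2),
      g (f θ) * f' θ = 1 / Real.sqrt (1 - c ^ 2 * Real.sin θ ^ 2) := by
    intro θ hθ
    exact pointwise_id y c hy0 hc2 hc0 hθ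
  have hg2 : IntegrableOn (fun x => (g ∘ f) x * f' x) [[(0:ℝ), Real.pi / 2]] := by
    rw [huIcc]
    apply (hRcont.integrableOn_Icc).congr
    rw [Filter.EventuallyEq, MeasureTheory.ae_restrict_iff' measurableSet_Icc]
    filter_upwards [hne] with θ hθne hθ
    exact (hpt θ ⟨hθ.1, lt_of_le_of_ne hθ.2 hθne⟩).symm
  have Hsub := intervalIntegral.integral_comp_mul_deriv''' hf_cont hff' hg_cont hg1 hg2
  rw [hf0, hfpi] at Hsub
  calc (∫ t in (0:ℝ)..T, g t)
      = ∫ θ in (0:ℝ)..(Real.pi / 2), (g ∘ f) θ * f' θ := Hsub.symm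
    _ = ∫ θ in (0:ℝ)..(Real.pi / 2), 1 / Real.sqrt (1 - c ^ 2 * Real.sin θ ^ 2) := by
        apply intervalIntegral.integral_congr_ae
        filter_upwards [hne] with θ hθne hθ
        rw [uIoc_of_le hpi2] at hθ
        exact hpt θ ⟨hθ.1.le, lt_of_le_of_ne hθ.2 hθne⟩
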